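/- arXiv:2102.10911 — 5 statements merged into one kernel-verified Lean document; each statement's English description precedes it below -/
import Mathlib

section
/- Let σ be a real analytic function on an interval (α,β) with β>α. If there exists N ∈ ℕ such that for all w with sufficiently small absolute value the values σ((α+β)/2 + wn), n=1,…,N, are rationally dependent (i.e., linearly dependent over ℚ), then σ is a polynomial on (α,β). -/
open Filter Set

lemma evcomb {N : ℕ} (lam : Fin N → ℚ) (hne : ∃ i, lam i ≠ 0) :
    ∃ K : ℕ, ∀ k ≥ K, (∑ n : Fin N, (lam n : ℝ) * (((n : ℕ) : ℝ) + 1) ^ k) ≠ 0 := by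
  classical
  obtain ⟨i0, hi0⟩ := hne
  set s : Finset (Fin N) := Finset.univ.filter (fun n => lam n ≠ 0) with hs_def
  have hs : s.Nonempty := ⟨i0, by simp [hs_def, hi0]⟩
  set m := s.max' hs with hm_def
  have hm : lam m ≠ 0 := by
    have := s.max'_mem hs
    simp [hs_def] at this
    exact this
  have hle : ∀ n, lam n ≠ 0 → n ≤ m := fun n hn => s.le_max' n (by simp [hs_def, hn])
  set M : ℝ := ((m : ℕ) : ℝ) + 1 with hM_def
  have hM : 0 < M := by positivity
  have htend : Tendsto (fun k : ℕ => ∑ n : Fin N, (lam n : ℝ) * ((((n : ℕ) : ℝ) + 1) / M) ^ k)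
      atTop (nhds ((lam m : ℝ))) := by
    have h1 : Tendsto (fun k : ℕ => ∑ n : Fin N, (lam n : ℝ) * ((((n : ℕ) : ℝ) + 1) / M) ^ k)
        atTop (nhds (∑ n : Fin N, if n = m then (lam m : ℝ) else 0)) := by
      apply tendsto_finset_sum
      intro n _
      by_cases hnm : n = m
      · subst hnm
        simp only [if_pos rfl, ← hM_def, div_self hM.ne', one_pow, mul_one]
        exact tendsto_const_nhds
      · by_cases hn0 : lam n = 0
        · simp [hn0, if_neg hnm]
        · have hnltm : n < m := lt_of_le_of_ne (hle n hn0) hnm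
          have hratio : (((n : ℕ) : ℝ) + 1) / M < 1 := by
            rw [div_lt_one hM, hM_def]
            have : (n : ℕ) < (m : ℕ) := hnltm
            exact_mod_cast Nat.succ_lt_succ this
          have h0 : (0 : ℝ) ≤ (((n : ℕ) : ℝ) + 1) / M := by positivity
          have := tendsto_pow_atTop_nhds_zero_of_lt_one h0 hratio
          simpa [if_neg hnm] using this.const_mul ((lam n : ℝ))
    simpa using h1
  have hev : ∀ᶠ k in atTop,
      (∑ n : Fin N, (lam n : ℝ) * ((((n : ℕ) : ℝ) + 1) / M) ^ k) ≠ 0 :=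
    htend.eventually_ne (by exact_mod_cast hm)
  obtain ⟨K, hK⟩ := eventually_atTop.mp hev
  refine ⟨K, fun k hk hzero => hK k hk ?_⟩
  have : (∑ n : Fin N, (lam n : ℝ) * ((((n : ℕ) : ℝ) + 1) / M) ^ k)
      = (∑ n : Fin N, (lam n : ℝ) * (((n : ℕ) : ℝ) + 1) ^ k) / M ^ k := by
    rw [Finset.sum_div]
    refine Finset.sum_congr rfl fun n _ => ?_
    rw [div_pow]
    ring
  rw [this, hzero, zero_div]

lemma iteratedDeriv_congr_ev {f g : ℝ → ℝ} {x : ℝ} (h : f =ᶠ[nhds x] g) (k : ℕ) :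
    iteratedDeriv k f x = iteratedDeriv k g x := by
  have H : ∀ k : ℕ, iteratedDeriv k f =ᶠ[nhds x] iteratedDeriv k g := by
    intro k
    induction k with
    | zero => simpa [iteratedDeriv_zero] using h
    | succ k ih => simpa only [iteratedDeriv_succ] using ih.deriv
  exact (H k).eq_of_nhds

lemma iteratedDeriv_zero_fun {x : ℝ} (k : ℕ) :
    iteratedDeriv k (fun _ : ℝ => (0 : ℝ)) x = 0 := by
  induction k generalizing x with
  | zero => simp
  | succ k ih =>
    rw [iteratedDeriv_succ']
    simp only [deriv_const']
    exact ih

/-- If σ is real analytic on (α,β) and there is N such that for all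
sufficiently small w the values σ((α+β)/2 + w·n), n = 1,…,N, are rationally
dependent (not linearly independent over ℚ), then σ is a polynomial on (α,β). -/
theorem stmt0 (α β : ℝ) (hαβ : α < β) (σ : ℝ → ℝ)
    (hσ : AnalyticOn ℝ σ (Set.Ioo α β))
    (h : ∃ N : ℕ, ∃ ε > (0:ℝ), ∀ w : ℝ, |w| < ε →
      ¬ LinearIndependent ℚ (fun n : Fin N => σ ((α + β) / 2 + w * ((n : ℕ) + 1)))) :
    ∃ p : Polynomial ℝ, ∀ x ∈ Set.Ioo α β, σ x = p.eval x := by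
  classical
  have hσ' : AnalyticOnNhd ℝ σ (Set.Ioo α β) :=
    (isOpen_Ioo.analyticOn_iff_analyticOnNhd).mp hσ
  obtain ⟨N, ε, hε, hdep⟩ := h
  set c : ℝ := (α + β) / 2 with hc
  have hcmem : c ∈ Set.Ioo α β := by constructor <;> (rw [hc]; linarith)
  set δ : ℝ := min ε ((β - α) / (2 * (N + 1))) with hδ_def
  have hδ : 0 < δ := by
    apply lt_min hε
    have : (0:ℝ) < β - α := by linarith
    positivity
  -- domain check
  have hdom : ∀ w : ℝ, |w| < δ → ∀ n : Fin N, c + w * (((n : ℕ) : ℝ) + 1) ∈ Set.Ioo α β := by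
    intro w hw n
    have hn1 : ((n : ℕ) : ℝ) + 1 ≤ (N : ℝ) + 1 := by
      have : (n : ℕ) < N := n.isLt
      have : ((n : ℕ) : ℝ) ≤ (N : ℝ) := by exact_mod_cast this.le
      linarith
    have hwδ : |w| < (β - α) / (2 * (N + 1)) := lt_of_lt_of_le hw (min_le_right _ _)
    have hNpos : (0:ℝ) < (N : ℝ) + 1 := by positivity
    have habs : |w * (((n : ℕ) : ℝ) + 1)| < (β - α) / 2 := by
      rw [abs_mul, abs_of_nonneg (by positivity : (0:ℝ) ≤ ((n : ℕ) : ℝ) + 1)]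
      calc |w| * (((n : ℕ) : ℝ) + 1) ≤ |w| * ((N : ℝ) + 1) :=
            mul_le_mul_of_nonneg_left hn1 (abs_nonneg w)
        _ < ((β - α) / (2 * (N + 1))) * ((N : ℝ) + 1) :=
            mul_lt_mul_of_pos_right hwδ hNpos
        _ = (β - α) / 2 := by field_simp
    obtain ⟨h1, h2⟩ := abs_lt.mp habs
    rw [Set.mem_Ioo]
    constructor <;> linarith
  -- pigeonhole
  set T : Set ℝ := Set.Icc (-(δ/2)) (δ/2) with hT_def
  have hTδ : ∀ w ∈ T, |w| < δ := by
    intro w hw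
    rw [abs_lt]
    obtain ⟨h1, h2⟩ := hw
    constructor <;> linarith
  have hlam : ∀ w ∈ T, ∃ lam : Fin N → ℚ, (∃ i, lam i ≠ 0) ∧
      ∑ n : Fin N, (lam n : ℝ) * σ (c + w * (((n : ℕ) : ℝ) + 1)) = 0 := by
    intro w hw
    have := (Fintype.not_linearIndependent_iff).mp (hdep w (lt_of_lt_of_le (hTδ w hw) (min_le_left _ _)))
    obtain ⟨g, hg, hi⟩ := this
    refine ⟨g, hi, ?_⟩
    rw [← hg]
    refine Finset.sum_congr rfl fun n _ => ?_
    rw [Rat.smul_def]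
  set Λ : ℝ → (Fin N → ℚ) := fun w => if hw : w ∈ T then (hlam w hw).choose else 0 with hΛ_def
  have hΛspec : ∀ w ∈ T, (∃ i, Λ w i ≠ 0) ∧
      ∑ n : Fin N, ((Λ w n : ℝ)) * σ (c + w * (((n : ℕ) : ℝ) + 1)) = 0 := by
    intro w hw
    simp only [hΛ_def, dif_pos hw]
    exact (hlam w hw).choose_spec
  have hTnc : ¬ T.Countable := by
    intro hcnt
    have h1 : (Cardinal.mk T) ≤ Cardinal.aleph0 := by
      rw [Cardinal.mk_le_aleph0_iff]
      exact hcnt.to_subtype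
    rw [hT_def, Cardinal.mk_Icc_real (by linarith : -(δ/2) < δ/2)] at h1
    exact absurd h1 (not_le.mpr Cardinal.aleph0_lt_continuum)
  have hexists : ∃ lam : Fin N → ℚ, ¬ ({w ∈ T | Λ w = lam}).Countable := by
    by_contra hcon
    push_neg at hcon
    apply hTnc
    have : T ⊆ ⋃ lam : Fin N → ℚ, {w ∈ T | Λ w = lam} := by
      intro w hw
      exact Set.mem_iUnion.mpr ⟨Λ w, hw, rfl⟩
    exact (Set.countable_iUnion hcon).mono this
  obtain ⟨lam, hSnc⟩ := hexists
  set S : Set ℝ := {w ∈ T | Λ w = lam} with hS_def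
  have hS_sub : S ⊆ T := fun w hw => hw.1
  have hS_inf : S.Infinite := by
    intro hfin
    exact hSnc hfin.countable
  obtain ⟨x₀, hx₀T, hx₀acc⟩ := hS_inf.exists_accPt_of_subset_isCompact isCompact_Icc hS_sub
  have hx₀mem : x₀ ∈ Set.Ioo (-δ) δ := by
    have := hTδ x₀ hx₀T
    rw [abs_lt] at this
    exact ⟨this.1, this.2⟩
  -- lam is nonzero
  obtain ⟨w₁, hw₁⟩ := hS_inf.nonempty
  have hlamne : ∃ i, lam i ≠ 0 := by
    have := (hΛspec w₁ hw₁.1).1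
    rwa [hw₁.2] at this
  have hrel : ∀ w ∈ S, ∑ n : Fin N, (lam n : ℝ) * σ (c + w * (((n : ℕ) : ℝ) + 1)) = 0 := by
    intro w hw
    have := (hΛspec w hw.1).2
    rwa [hw.2] at this
  -- g and its vanishing
  set g : ℝ → ℝ := fun w => ∑ n : Fin N, (lam n : ℝ) * σ (c + w * (((n : ℕ) : ℝ) + 1)) with hg_def
  have hg_an : AnalyticOnNhd ℝ g (Set.Ioo (-δ) δ) := by
    intro w hw
    apply Finset.analyticAt_fun_sum
    intro n _
    have hwδ : |w| < δ := abs_lt.mpr ⟨hw.1, hw.2⟩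
    have hin : AnalyticAt ℝ (fun z : ℝ => c + z * (((n : ℕ) : ℝ) + 1)) w := by
      apply analyticAt_const.add
      exact analyticAt_id.mul analyticAt_const
    have houter : AnalyticAt ℝ σ ((fun z : ℝ => c + z * (((n : ℕ) : ℝ) + 1)) w) :=
      hσ' _ (hdom w hwδ n)
    exact analyticAt_const.mul
      (AnalyticAt.comp (f := fun z : ℝ => c + z * (((n : ℕ) : ℝ) + 1)) houter hin)
  have hfreq : ∃ᶠ z in nhdsWithin x₀ {x₀}ᶜ, g z = 0 := by
    rw [frequently_nhdsWithin_iff]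
    rw [accPt_iff_frequently] at hx₀acc
    exact hx₀acc.mono fun y hy => ⟨hrel y hy.2, hy.1⟩
  have hg0 : Set.EqOn g 0 (Set.Ioo (-δ) δ) :=
    hg_an.eqOn_zero_of_preconnected_of_frequently_eq_zero isPreconnected_Ioo hx₀mem hfreq
  -- iterated derivative formula
  have key : ∀ k : ℕ, ∀ w ∈ Set.Ioo (-δ) δ, iteratedDeriv k g w =
      ∑ n : Fin N, (lam n : ℝ) * (((n : ℕ) : ℝ) + 1) ^ k *
        iteratedDeriv k σ (c + w * (((n : ℕ) : ℝ) + 1)) := by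
    intro k
    induction k with
    | zero => intro w hw; simp [hg_def]
    | succ k ih =>
      intro w hw
      have hev : iteratedDeriv k g =ᶠ[nhds w] fun z =>
          ∑ n : Fin N, (lam n : ℝ) * (((n : ℕ) : ℝ) + 1) ^ k *
            iteratedDeriv k σ (c + z * (((n : ℕ) : ℝ) + 1)) :=
        Filter.eventuallyEq_of_mem (isOpen_Ioo.mem_nhds hw) ih
      rw [iteratedDeriv_succ, hev.deriv_eq]
      have hD : ∀ n : Fin N, HasDerivAt
          (fun z : ℝ => iteratedDeriv k σ (c + z * (((n : ℕ) : ℝ) + 1)))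
          ((((n : ℕ) : ℝ) + 1) * iteratedDeriv (k+1) σ (c + w * (((n : ℕ) : ℝ) + 1))) w := by
        intro n
        have hwδ : |w| < δ := abs_lt.mpr ⟨hw.1, hw.2⟩
        have han : AnalyticAt ℝ (iteratedDeriv k σ) (c + w * (((n : ℕ) : ℝ) + 1)) := by
          have h1 := hσ'.iterated_deriv k
          rw [← iteratedDeriv_eq_iterate] at h1
          exact h1 _ (hdom w hwδ n)
        have h1 : HasDerivAt (fun z : ℝ => c + z * (((n : ℕ) : ℝ) + 1))
            (((n : ℕ) : ℝ) + 1) w := by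
          simpa using ((hasDerivAt_id w).mul_const (((n : ℕ) : ℝ) + 1)).const_add c
        have h2 := han.differentiableAt.hasDerivAt
        have h3 := HasDerivAt.comp w h2 h1
        simp only [Function.comp_def] at h3
        rw [iteratedDeriv_succ]
        rw [mul_comm (((n : ℕ) : ℝ) + 1)]
        exact h3
      have hsum : HasDerivAt (fun z : ℝ => ∑ n : Fin N, (lam n : ℝ) * (((n : ℕ) : ℝ) + 1) ^ k *
            iteratedDeriv k σ (c + z * (((n : ℕ) : ℝ) + 1)))
          (∑ n : Fin N, (lam n : ℝ) * (((n : ℕ) : ℝ) + 1) ^ k *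
            ((((n : ℕ) : ℝ) + 1) * iteratedDeriv (k+1) σ (c + w * (((n : ℕ) : ℝ) + 1)))) w :=
        HasDerivAt.fun_sum fun n _ => (hD n).const_mul _
      rw [hsum.deriv]
      refine Finset.sum_congr rfl fun n _ => ?_
      ring
  -- derivatives of σ at c vanish eventually
  have h0mem : (0:ℝ) ∈ Set.Ioo (-δ) δ := by rw [Set.mem_Ioo]; constructor <;> linarith
  have hvanish : ∀ k : ℕ,
      (∑ n : Fin N, (lam n : ℝ) * (((n : ℕ) : ℝ) + 1) ^ k) * iteratedDeriv k σ c = 0 := by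
    intro k
    have h1 : iteratedDeriv k g 0 = 0 := by
      have hgev : g =ᶠ[nhds 0] (fun _ => (0:ℝ)) :=
        Filter.eventuallyEq_of_mem (isOpen_Ioo.mem_nhds h0mem) (fun x hx => hg0 hx)
      rw [iteratedDeriv_congr_ev hgev k, iteratedDeriv_zero_fun]
    have h2 := key k 0 h0mem
    rw [h1] at h2
    simp only [zero_mul, add_zero] at h2
    rw [Finset.sum_mul]
    exact h2.symm
  obtain ⟨K, hK⟩ := evcomb lam hlamne
  have hDvanish : ∀ k ≥ K, iteratedDeriv k σ c = 0 := by
    intro k hk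
    have := hvanish k
    rcases mul_eq_zero.mp this with h | h
    · exact absurd h (hK k hk)
    · exact h
  -- power series and polynomial
  obtain ⟨p, hp⟩ := hσ' c hcmem
  have hcoeff : ∀ k ≥ K, p.coeff k = 0 := by
    intro k hk
    have hp2 := hp
    obtain ⟨r, hr⟩ := hp2
    have h1 := hr.factorial_smul (1:ℝ) k
    have h2 : iteratedFDeriv ℝ k σ c (fun _ => (1:ℝ)) = 0 := by
      rw [← iteratedDeriv_eq_iteratedFDeriv]
      exact hDvanish k hk
    rw [h2] at h1
    have h3 : ((Nat.factorial k : ℕ) : ℝ) * p k (fun _ => (1:ℝ)) = 0 := by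
      rw [← nsmul_eq_mul]; exact h1
    have hk0 : ((Nat.factorial k : ℕ) : ℝ) ≠ 0 := by exact_mod_cast Nat.factorial_ne_zero k
    have h4 : p k (fun _ => (1:ℝ)) = 0 := by
      rcases mul_eq_zero.mp h3 with h | h
      · exact absurd h hk0
      · exact h
    exact h4
  -- build polynomial
  have hps := hasFPowerSeriesAt_iff'.mp hp
  set f : ℝ → ℝ := fun z => ∑ k ∈ Finset.range K, p.coeff k * (z - c) ^ k with hf_def
  have hev : σ =ᶠ[nhds c] f := by
    filter_upwards [hps] with z hz
    have h0 : ∀ b ∉ Finset.range K, (z - c) ^ b • p.coeff b = 0 := by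
      intro b hb
      rw [hcoeff b (by simpa using hb), smul_zero]
    have h5 := (hasSum_sum_of_ne_finset_zero h0).unique hz
    rw [← h5]
    simp only [hf_def]
    refine Finset.sum_congr rfl fun k _ => ?_
    rw [smul_eq_mul]; ring
  have hf_an : AnalyticOnNhd ℝ f (Set.Ioo α β) := by
    intro z hz
    apply Finset.analyticAt_fun_sum
    intro k _
    exact analyticAt_const.mul ((analyticAt_id.sub analyticAt_const).pow k)
  have heq : Set.EqOn σ f (Set.Ioo α β) :=
    hσ'.eqOn_of_preconnected_of_eventuallyEq hf_an isPreconnected_Ioo hcmem hev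
  refine ⟨∑ k ∈ Finset.range K, Polynomial.C (p.coeff k) * (Polynomial.X - Polynomial.C c) ^ k,
    fun x hx => ?_⟩
  rw [heq hx, hf_def]
  simp [Polynomial.eval_finset_sum]
end

section
/- Let σ : ℝ → ℝ be a function having a second derivative at a point x₀ with σ''(x₀) ≠ 0. Then for every C > 0 and ε > 0 there exists δ > 0 such that for all x with |x| < C, |(σ''(x₀))⁻¹ · δ⁻² · (σ(x₀+xδ) + σ(x₀−xδ) − 2σ(x₀)) − x²| < ε. -/
set_option maxHeartbeats 1000000 in
/-- If σ has a second derivative c ≠ 0 at x₀, then squaring is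
uniformly approximated on |x| < C by c⁻¹δ⁻²(σ(x₀+xδ)+σ(x₀−xδ)−2σ(x₀)). -/
theorem stmt4 (σ σ' : ℝ → ℝ) (x₀ c : ℝ)
    (h1 : ∀ᶠ x in nhds x₀, HasDerivAt σ (σ' x) x)
    (h2 : HasDerivAt σ' c x₀) (hc : c ≠ 0)
    (C ε : ℝ) (hC : 0 < C) (hε : 0 < ε) :
    ∃ δ > (0:ℝ), ∀ x : ℝ, |x| < C →
      |c⁻¹ * δ⁻¹ ^ 2 * (σ (x₀ + x * δ) + σ (x₀ - x * δ) - 2 * σ x₀) - x ^ 2| < ε := by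
  have hcabs : 0 < |c| := abs_pos.mpr hc
  set η : ℝ := ε * |c| / (4 * C ^ 2) with hηdef
  have hη : 0 < η := by positivity
  have hlo : (fun y : ℝ => σ' y - σ' x₀ - (y - x₀) • c) =o[nhds x₀] fun y => y - x₀ :=
    hasDerivAt_iff_isLittleO.mp h2
  have hev : ∀ᶠ y in nhds x₀, |σ' y - σ' x₀ - (y - x₀) * c| ≤ η * |y - x₀| := by
    simpa [Real.norm_eq_abs, smul_eq_mul] using hlo.def hη
  obtain ⟨r, hr, hball⟩ := Metric.eventually_nhds_iff.mp (hev.and h1)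
  set g : ℝ → ℝ := fun h => σ (x₀ + h) - σ x₀ - σ' x₀ * h - c * h ^ 2 / 2 with hg
  have hgd : ∀ t : ℝ, |t| < r → HasDerivAt g (σ' (x₀ + t) - σ' x₀ - c * t) t := by
    intro t ht
    have hmem : dist (x₀ + t) x₀ < r := by
      simpa [Real.dist_eq, abs_sub_comm] using ht
    have hσ : HasDerivAt σ (σ' (x₀ + t)) (x₀ + t) := (hball hmem).2
    have hin : HasDerivAt (fun h : ℝ => x₀ + h) 1 t := by
      simpa using (hasDerivAt_id t).const_add x₀
    have hcomp : HasDerivAt (fun h : ℝ => σ (x₀ + h)) (σ' (x₀ + t)) t := by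
      have := hσ.comp t hin; rw [mul_one] at this; exact this
    have := ((hcomp.sub_const (σ x₀)).sub ((hasDerivAt_id t).const_mul (σ' x₀))).sub
      (((hasDerivAt_pow 2 t).const_mul c).div_const 2)
    exact this.congr_deriv (by rw [show (2:ℕ) - 1 = 1 from rfl]; push_cast; ring)
  have key : ∀ h : ℝ, |h| < r → |g h| ≤ η * h ^ 2 := by
    intro h hh
    have habs : (0:ℝ) ≤ |h| := abs_nonneg h
    set s : Set ℝ := Set.Icc (-|h|) |h|
    have hsub : ∀ t ∈ s, |t| < r := by
      intro t ht
      have := abs_le.mpr ⟨ht.1, ht.2⟩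
      linarith
    have hder : ∀ t ∈ s, HasDerivWithinAt g (σ' (x₀ + t) - σ' x₀ - c * t) s t :=
      fun t ht => (hgd t (hsub t ht)).hasDerivWithinAt
    have hbd : ∀ t ∈ s, ‖σ' (x₀ + t) - σ' x₀ - c * t‖ ≤ η * |h| := by
      intro t ht
      have htr : |t| < r := hsub t ht
      have hmem : dist (x₀ + t) x₀ < r := by
        simpa [Real.dist_eq, abs_sub_comm] using htr
      have hb := (hball hmem).1
      have : |σ' (x₀ + t) - σ' x₀ - c * t| ≤ η * |t| := by
        simpa [mul_comm] using hb
      have htle : |t| ≤ |h| := abs_le.mpr ⟨ht.1, ht.2⟩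
      calc ‖σ' (x₀ + t) - σ' x₀ - c * t‖ = |σ' (x₀ + t) - σ' x₀ - c * t| := rfl
        _ ≤ η * |t| := this
        _ ≤ η * |h| := by nlinarith
    have hconv : Convex ℝ s := convex_Icc _ _
    have h0 : (0:ℝ) ∈ s := by constructor <;> simp [habs]
    have hhm : h ∈ s := ⟨neg_abs_le h, le_abs_self h⟩
    have := hconv.norm_image_sub_le_of_norm_hasDerivWithin_le hder hbd h0 hhm
    have hg0 : g 0 = 0 := by simp [hg]
    have habsh : ‖h - 0‖ = |h| := by simp [Real.norm_eq_abs]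
    rw [hg0, sub_zero, habsh, Real.norm_eq_abs] at this
    calc |g h| ≤ η * |h| * |h| := this
      _ = η * h ^ 2 := by rw [mul_assoc, ← abs_mul, ← sq, abs_pow, sq_abs]
  refine ⟨r / (2 * C), by positivity, fun x hx => ?_⟩
  set δ : ℝ := r / (2 * C) with hδ
  have hδpos : 0 < δ := by positivity
  have hxd : |x * δ| < r := by
    rw [abs_mul, abs_of_pos hδpos]
    calc |x| * δ < C * δ := by nlinarith
      _ = r / 2 := by field_simp [hδ]; rw [hδ]; field_simp
      _ < r := by linarith
  have hxd' : |-(x * δ)| < r := by rwa [abs_neg]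
  have k1 := key _ hxd
  have k2 := key _ hxd'
  have hsum : σ (x₀ + x * δ) + σ (x₀ - x * δ) - 2 * σ x₀
      = g (x * δ) + g (-(x * δ)) + c * (x * δ) ^ 2 := by
    simp only [hg]
    ring_nf
  have hδne : δ ≠ 0 := ne_of_gt hδpos
  have hmain : c⁻¹ * δ⁻¹ ^ 2 * (σ (x₀ + x * δ) + σ (x₀ - x * δ) - 2 * σ x₀) - x ^ 2
      = c⁻¹ * δ⁻¹ ^ 2 * (g (x * δ) + g (-(x * δ))) := by
    rw [hsum]
    field_simp
    ring
  rw [hmain]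
  have hb : |c⁻¹ * δ⁻¹ ^ 2 * (g (x * δ) + g (-(x * δ)))|
      ≤ |c|⁻¹ * δ⁻¹ ^ 2 * (2 * η * (x * δ) ^ 2) := by
    rw [abs_mul, abs_mul, abs_inv, abs_pow, abs_inv, abs_of_pos hδpos]
    have : |g (x * δ) + g (-(x * δ))| ≤ 2 * η * (x * δ) ^ 2 := by
      have := abs_add_le (g (x * δ)) (g (-(x * δ)))
      have hsq : (-(x * δ)) ^ 2 = (x * δ) ^ 2 := by ring
      rw [hsq] at k2
      linarith
    have hpos : 0 ≤ |c|⁻¹ * δ⁻¹ ^ 2 := by positivity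
    calc |c|⁻¹ * δ⁻¹ ^ 2 * |g (x * δ) + g (-(x * δ))|
        ≤ |c|⁻¹ * δ⁻¹ ^ 2 * (2 * η * (x * δ) ^ 2) := by nlinarith
      _ = _ := rfl
  have heq : |c|⁻¹ * δ⁻¹ ^ 2 * (2 * η * (x * δ) ^ 2) = 2 * η * x ^ 2 / |c| := by
    field_simp
  rw [heq] at hb
  have hx2 : x ^ 2 ≤ C ^ 2 := by nlinarith [abs_nonneg x, sq_abs x, le_abs_self x, neg_abs_le x]
  have heq2 : 2 * η * x ^ 2 / |c| = ε * x ^ 2 / (2 * C ^ 2) := by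
    rw [hηdef]; field_simp; ring
  have hle : ε * x ^ 2 / (2 * C ^ 2) ≤ ε / 2 := by
    rw [div_le_div_iff₀ (by positivity) (by norm_num : (0:ℝ) < 2)]
    nlinarith [hx2, hε.le]
  rw [heq2] at hb
  linarith [hb, hle]
end

section
/- Define θ(x) = (1/π)·arcsin(sin(πx)), ν(x) = x + θ(x), ψ(x) = ν(θ(x) − 1/2) + 1. Then for all x ∈ ℝ, Σ_{q=−1}^{2} ψ(x − q/2) = 1, i.e., the shifts of ψ by half-integers q/2 for q ∈ {−1,0,1,2} form a partition of unity (using the 2-periodicity of ψ). -/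
open Real

/-- With θ(x) = (1/π)arcsin(sin πx), ν(x) = x + θ(x),
ψ(x) = ν(θ(x) − 1/2) + 1, the four half-integer shifts of ψ form a partition
of unity: Σ_{q=−1}^{2} ψ(x − q/2) = 1 for all x. -/
theorem stmt12 (θ ν ψ : ℝ → ℝ)
    (hθ : ∀ x, θ x = (1 / π) * arcsin (Real.sin (π * x)))
    (hν : ∀ x, ν x = x + θ x)
    (hψ : ∀ x, ψ x = ν (θ x - 1/2) + 1) :
    ∀ x : ℝ, ∑ q ∈ Finset.Icc (-1 : ℤ) 2, ψ (x - (q : ℝ) / 2) = 1 := by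
  have hπ : (0:ℝ) < π := Real.pi_pos
  have hπ0 : π ≠ 0 := ne_of_gt hπ
  -- θ a = a on [-1/2, 1/2]
  have hθ1 : ∀ a : ℝ, -(1/2) ≤ a → a ≤ 1/2 → θ a = a := by
    intro a h1 h2
    rw [hθ, Real.arcsin_sin (by nlinarith) (by nlinarith)]
    field_simp
  -- θ a = 1 - a on [1/2, 3/2]
  have hθ2 : ∀ a : ℝ, 1/2 ≤ a → a ≤ 3/2 → θ a = 1 - a := by
    intro a h1 h2
    have hs : Real.sin (π * a) = Real.sin (π * (1 - a)) := by
      rw [show π * (1 - a) = π - π * a by ring, Real.sin_pi_sub]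
    rw [hθ, hs, Real.arcsin_sin (by nlinarith) (by nlinarith)]
    field_simp
  -- θ a = -1 - a on [-3/2, -1/2]
  have hθ3 : ∀ a : ℝ, -(3/2) ≤ a → a ≤ -(1/2) → θ a = -1 - a := by
    intro a h1 h2
    have hs : Real.sin (π * a) = Real.sin (π * (-1 - a)) := by
      rw [show π * (-1 - a) = -(π * a + π) by ring, Real.sin_neg,
        Real.sin_add_pi, neg_neg]
    rw [hθ, hs, Real.arcsin_sin (by nlinarith) (by nlinarith)]
    field_simp
  -- periodicity ψ (x + 2) = ψ x
  have hθper : ∀ x : ℝ, θ (x + 2) = θ x := by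
    intro x
    rw [hθ, hθ, show π * (x + 2) = π * x + 2 * π by ring, Real.sin_add_two_pi]
  have hψper : ∀ x : ℝ, ψ (x + 2) = ψ x := by
    intro x; rw [hψ, hψ, hθper]
  -- the four-term sum
  set S : ℝ → ℝ := fun x => ψ (x + 1/2) + ψ x + ψ (x - 1/2) + ψ (x - 1) with hS
  have hShalf : ∀ x : ℝ, S (x + 1/2) = S x := by
    intro x
    have h2 : ψ (x + 1/2 + 1/2) = ψ (x - 1) := by
      rw [show x + 1/2 + 1/2 = (x - 1) + 2 by ring, hψper]
    simp only [hS]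
    rw [h2, show x + 1/2 - 1/2 = x by ring, show x + 1/2 - 1 = x - 1/2 by ring]
    ring
  have hSint : ∀ n : ℤ, ∀ x : ℝ, S (x + n / 2) = S x := by
    intro n
    induction n using Int.induction_on with
    | zero => intro x; norm_num
    | succ k ih =>
        intro x
        have := hShalf (x + k / 2)
        push_cast
        push_cast at this ih
        rw [show x + (k + 1) / 2 = x + k / 2 + 1/2 by ring, this, ih]
    | pred k ih =>
        intro x
        have := hShalf (x + (-k - 1) / 2)
        push_cast
        push_cast at this ih
        rw [show x + (-↑k - 1) / 2 + 1/2 = x + -↑k / 2 by ring] at this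
        rw [← this, ih]
  -- base case on [0, 1/2]
  have hbase : ∀ y : ℝ, 0 ≤ y → y ≤ 1/2 → S y = 1 := by
    intro y h0 h1
    have ha : ψ y = 2 * y := by
      rw [hψ, hθ1 y (by linarith) (by linarith), hν,
        hθ1 (y - 1/2) (by linarith) (by linarith)]
      ring
    have hb : ψ (y + 1/2) = 1 - 2 * y := by
      rw [hψ, hθ2 (y + 1/2) (by linarith) (by linarith), hν,
        show 1 - (y + 1/2) - 1/2 = -y by ring,
        hθ1 (-y) (by linarith) (by linarith)]
      ring
    have hc : ψ (y - 1/2) = 0 := by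
      rw [hψ, hθ1 (y - 1/2) (by linarith) (by linarith), hν,
        show y - 1/2 - 1/2 = y - 1 by ring,
        hθ3 (y - 1) (by linarith) (by linarith)]
      ring
    have hd : ψ (y - 1) = 0 := by
      rw [hψ, hθ3 (y - 1) (by linarith) (by linarith), hν,
        show -1 - (y - 1) - 1/2 = -y - 1/2 by ring,
        hθ3 (-y - 1/2) (by linarith) (by linarith)]
      ring
    simp only [hS]
    rw [ha, hb, hc, hd]; ring
  -- conclusion
  intro x
  have hIcc : Finset.Icc (-1 : ℤ) 2 = {-1, 0, 1, 2} := by decide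
  rw [hIcc]
  have hsum : ∑ q ∈ ({-1, 0, 1, 2} : Finset ℤ), ψ (x - (q : ℝ) / 2) = S x := by
    simp only [hS]
    norm_num [Finset.sum_insert, Finset.mem_insert]
    ring
  rw [hsum]
  set n : ℤ := ⌊2 * x⌋ with hn
  have hfl1 : (n : ℝ) ≤ 2 * x := Int.floor_le _
  have hfl2 : 2 * x < n + 1 := Int.lt_floor_add_one _
  have hy : S x = S (x - n / 2) := by
    have := hSint n (x - n / 2)
    rw [show x - n / 2 + n / 2 = x by ring] at this
    exact this
  rw [hy]
  exact hbase _ (by linarith) (by linarith)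
end

section
/- For every N ≥ 1 there exists w ∈ ℝ such that the numbers sin(w·1), sin(w·2), …, sin(w·N) are rationally independent (linearly independent over ℚ). -/
open Real Set intervalIntegral

/-- `Real.sin` is analytic at every point. -/
lemma stmt13_analyticAt_sin (x : ℝ) : AnalyticAt ℝ Real.sin x := by
  have h1 : AnalyticAt ℂ Complex.sin (x : ℂ) := Complex.differentiable_sin.analyticAt _
  have h2 : AnalyticAt ℝ Complex.sin (x : ℂ) := h1.restrictScalars
  have h3 : AnalyticAt ℝ (fun t : ℝ => (Complex.ofRealCLM t)) x := Complex.ofRealCLM.analyticAt x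
  have h4 : AnalyticAt ℝ (fun z : ℂ => Complex.reCLM z) (Complex.sin x) :=
    Complex.reCLM.analyticAt _
  have h5 : AnalyticAt ℝ (fun t : ℝ => Complex.reCLM (Complex.sin (Complex.ofRealCLM t))) x :=
    (h4.comp h2).comp h3
  refine h5.congr ?_
  filter_upwards with t
  simp [Complex.sin_ofReal_re]

/-- Zeros of a real-analytic function that is not identically zero are countable. -/
lemma stmt13_countable_zeros {f : ℝ → ℝ} (hf : AnalyticOnNhd ℝ f Set.univ)
    (hne : ∃ x, f x ≠ 0) : Set.Countable {x : ℝ | f x = 0} := by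
  rcases hf.eqOn_zero_or_eventually_ne_zero_of_preconnected isPreconnected_univ with h | h
  · obtain ⟨x, hx⟩ := hne
    exact absurd (h (mem_univ x)) hx
  · have h' : {x : ℝ | f x ≠ 0} ∈ Filter.codiscrete ℝ := h
    rw [mem_codiscrete'] at h'
    have hcl : IsClosed ({x : ℝ | f x ≠ 0}ᶜ) := h'.1.isClosed_compl
    have hc : Set.Countable ({x : ℝ | f x ≠ 0}ᶜ) :=
      (hcl.isLindelof).countable h'.2.to_subtype
    simpa [compl_setOf] using hc

lemma stmt13_integral_cos_int (k : ℤ) (hk : k ≠ 0) :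
    ∫ x in (0:ℝ)..(2 * π), Real.cos (k * x) = 0 := by
  have hk' : (k : ℝ) ≠ 0 := Int.cast_ne_zero.mpr hk
  rw [intervalIntegral.integral_comp_mul_left Real.cos hk']
  rw [integral_cos]
  have h1 : (k : ℝ) * (2 * π) = ((2 * k : ℤ) : ℝ) * π := by push_cast; ring
  rw [mul_zero, Real.sin_zero, h1, Real.sin_int_mul_pi]
  simp

lemma stmt13_integral_cos_eval (k : ℤ) :
    ∫ x in (0:ℝ)..(2 * π), Real.cos (k * x) = if k = 0 then 2 * π else 0 := by
  split_ifs with hk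
  · subst hk; simp
  · exact stmt13_integral_cos_int k hk

lemma stmt13_sin_orth (a b : ℕ) :
    (∫ x in (0:ℝ)..(2 * π), Real.sin (((a:ℝ) + 1) * x) * Real.sin (((b:ℝ) + 1) * x))
      = if a = b then π else 0 := by
  have hid : ∀ x : ℝ, Real.sin (((a:ℝ) + 1) * x) * Real.sin (((b:ℝ) + 1) * x)
      = (Real.cos ((((a:ℤ) - b : ℤ) : ℝ) * x) - Real.cos ((((a:ℤ) + b + 2 : ℤ) : ℝ) * x)) / 2 := by
    intro x
    have h := Real.cos_sub_cos (((a:ℝ) - b) * x) (((a:ℝ) + b + 2) * x)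
    have e1 : ((((a:ℝ) - b) * x) + (((a:ℝ) + b + 2) * x)) / 2 = ((a:ℝ) + 1) * x := by ring
    have e2 : ((((a:ℝ) - b) * x) - (((a:ℝ) + b + 2) * x)) / 2 = -(((b:ℝ) + 1) * x) := by ring
    rw [e1, e2, Real.sin_neg] at h
    push_cast
    rw [h]; ring
  have i1 : IntervalIntegrable (fun x => Real.cos ((((a:ℤ) - b : ℤ) : ℝ) * x)) MeasureTheory.volume 0 (2 * π) :=
    (Real.continuous_cos.comp (continuous_const.mul continuous_id)).intervalIntegrable _ _
  have i2 : IntervalIntegrable (fun x => Real.cos ((((a:ℤ) + b + 2 : ℤ) : ℝ) * x)) MeasureTheory.volume 0 (2 * π) :=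
    (Real.continuous_cos.comp (continuous_const.mul continuous_id)).intervalIntegrable _ _
  calc (∫ x in (0:ℝ)..(2 * π), Real.sin (((a:ℝ) + 1) * x) * Real.sin (((b:ℝ) + 1) * x))
      = ∫ x in (0:ℝ)..(2 * π),
          (Real.cos ((((a:ℤ) - b : ℤ) : ℝ) * x) - Real.cos ((((a:ℤ) + b + 2 : ℤ) : ℝ) * x)) / 2 := by
        exact intervalIntegral.integral_congr fun x _ => hid x
    _ = ((∫ x in (0:ℝ)..(2 * π), Real.cos ((((a:ℤ) - b : ℤ) : ℝ) * x))
          - ∫ x in (0:ℝ)..(2 * π), Real.cos ((((a:ℤ) + b + 2 : ℤ) : ℝ) * x)) / 2 := by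
        rw [intervalIntegral.integral_div, intervalIntegral.integral_sub i1 i2]
    _ = if a = b then π else 0 := by
        rw [stmt13_integral_cos_eval, stmt13_integral_cos_eval]
        rw [if_neg (by omega : ¬ ((a:ℤ) + b + 2 = 0))]
        by_cases hab : a = b
        · rw [if_pos (by omega), if_pos hab]; ring
        · rw [if_neg (by omega), if_neg hab]; ring

lemma stmt13_coeff_zero {N : ℕ} (c : Fin N → ℝ)
    (h : ∀ x : ℝ, (∑ n : Fin N, c n * Real.sin (x * ((n : ℕ) + 1))) = 0) (m : Fin N) :
    c m = 0 := by
  have key : (∫ x in (0:ℝ)..(2 * π),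
      (∑ n : Fin N, c n * Real.sin (x * ((n : ℕ) + 1))) * Real.sin ((((m:ℕ):ℝ) + 1) * x)) = 0 := by
    simp [h]
  have h2 : (∫ x in (0:ℝ)..(2 * π),
      (∑ n : Fin N, c n * Real.sin (x * ((n : ℕ) + 1))) * Real.sin ((((m:ℕ):ℝ) + 1) * x))
      = ∑ n : Fin N, c n *
        ∫ x in (0:ℝ)..(2 * π), Real.sin ((((n:ℕ):ℝ) + 1) * x) * Real.sin ((((m:ℕ):ℝ) + 1) * x) := by
    have hint : ∀ n ∈ Finset.univ, IntervalIntegrable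
        (fun x => c n * (Real.sin ((((n:ℕ):ℝ) + 1) * x) * Real.sin ((((m:ℕ):ℝ) + 1) * x)))
        MeasureTheory.volume 0 (2 * π) := fun n _ =>
      (continuous_const.mul ((Real.continuous_sin.comp (continuous_const.mul continuous_id)).mul
        (Real.continuous_sin.comp (continuous_const.mul continuous_id)))).intervalIntegrable _ _
    have e : (∫ x in (0:ℝ)..(2 * π),
        (∑ n : Fin N, c n * Real.sin (x * ((n : ℕ) + 1))) * Real.sin ((((m:ℕ):ℝ) + 1) * x))
        = ∫ x in (0:ℝ)..(2 * π),
          ∑ n : Fin N, c n * (Real.sin ((((n:ℕ):ℝ) + 1) * x) * Real.sin ((((m:ℕ):ℝ) + 1) * x)) := by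
      refine intervalIntegral.integral_congr fun x _ => ?_
      rw [Finset.sum_mul]
      refine Finset.sum_congr rfl fun n _ => ?_
      rw [mul_assoc, mul_comm x]
    rw [e, intervalIntegral.integral_finset_sum hint]
    simp only [intervalIntegral.integral_const_mul]
  rw [h2] at key
  simp only [stmt13_sin_orth] at key
  have : (∑ n : Fin N, c n * if (n:ℕ) = (m:ℕ) then π else 0) = c m * π := by
    rw [Finset.sum_eq_single m]
    · simp
    · intro n _ hnm
      rw [if_neg (fun hc => hnm (Fin.ext hc)), mul_zero]
    · simp
  rw [this] at key
  exact (mul_eq_zero.mp key).resolve_right Real.pi_ne_zero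

/-- For every N ≥ 1 there is w ∈ ℝ such that
sin(w·1),…,sin(w·N) are linearly independent over ℚ. -/
theorem stmt13 (N : ℕ) (hN : 1 ≤ N) :
    ∃ w : ℝ, LinearIndependent ℚ (fun n : Fin N => Real.sin (w * ((n : ℕ) + 1))) := by
  classical
  set B : Set ℝ := ⋃ c ∈ {c : Fin N → ℚ | c ≠ 0},
      {x : ℝ | (∑ n : Fin N, ((c n : ℝ)) * Real.sin (x * ((n : ℕ) + 1))) = 0} with hBdef
  have hB : Set.Countable B := by
    refine Set.Countable.biUnion (Set.to_countable _) fun c hc => ?_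
    refine stmt13_countable_zeros (fun x _ => ?_) ?_
    · refine Finset.analyticAt_fun_sum _ fun n _ => ?_
      exact analyticAt_const.mul
        ((stmt13_analyticAt_sin _).comp (analyticAt_id.mul analyticAt_const))
    · by_contra hcon
      push_neg at hcon
      apply hc
      funext n
      have := stmt13_coeff_zero (fun n => (c n : ℝ)) hcon n
      exact_mod_cast this
  have hne : B ≠ Set.univ := fun he => Cardinal.not_countable_real (he ▸ hB)
  obtain ⟨w, hw⟩ := (Set.ne_univ_iff_exists_notMem _).mp hne
  refine ⟨w, ?_⟩
  rw [Fintype.linearIndependent_iff]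
  intro g hg i
  by_contra hgi
  apply hw
  refine Set.mem_biUnion (show g ∈ {c : Fin N → ℚ | c ≠ 0} from
    fun h0 => hgi (by simp [h0])) ?_
  show (∑ n : Fin N, ((g n : ℝ)) * Real.sin (w * ((n : ℕ) + 1))) = 0
  simpa [Rat.smul_def] using hg
end

section
/- Let f : I → ℝ be a nonzero real analytic function on an open interval, let x₀ ∈ I be a zero of f, and suppose ε > 0 is not a critical value of f and −ε is not a critical value of f. Then for all sufficiently small such ε, the two functions f − ε and f + ε together have at least two zeros, each nondegenerate (nonzero derivative at the zero), in any fixed neighborhood of x₀. -/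
/-- IVT helper: if f is continuous on [u,v], f u = 0, and 0 < ε < |f v|,
then f attains ε or -ε strictly between u and v. -/
lemma ivt_helper (f : ℝ → ℝ) (u v : ℝ) (huv : u < v)
    (hc : ContinuousOn f (Set.Icc u v)) (hu : f u = 0)
    (ε : ℝ) (hε : 0 < ε) (hεv : ε < |f v|) :
    ∃ x ∈ Set.Ioo u v, f x = ε ∨ f x = -ε := by
  rcases le_or_gt 0 (f v) with h | h
  · rw [abs_of_nonneg h] at hεv
    have : ε ∈ Set.Ioo (f u) (f v) := by constructor <;> simp [hu, hε, hεv]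
    obtain ⟨x, hx, hfx⟩ := intermediate_value_Ioo huv.le hc this
    exact ⟨x, hx, Or.inl hfx⟩
  · rw [abs_of_neg h] at hεv
    have : -ε ∈ Set.Ioo (f v) (f u) := by
      constructor
      · linarith
      · simp [hu]; linarith
    obtain ⟨x, hx, hfx⟩ := intermediate_value_Ioo' huv.le hc this
    exact ⟨x, hx, Or.inr hfx⟩

/-- Let f be analytic and not identically zero on an open interval,
x₀ a zero of f, U a neighborhood of x₀. Then for all sufficiently small ε > 0 such
that neither ε nor −ε is a critical value of f, the functions f − ε and f + ε
together have at least two nondegenerate zeros in U. -/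
theorem stmt15 (a b : ℝ) (f : ℝ → ℝ) (hf : AnalyticOn ℝ f (Set.Ioo a b))
    (hne : ∃ x ∈ Set.Ioo a b, f x ≠ 0)
    (x₀ : ℝ) (hx₀ : x₀ ∈ Set.Ioo a b) (hz : f x₀ = 0)
    (U : Set ℝ) (hU : U ∈ nhds x₀) :
    ∃ ε₀ > (0:ℝ), ∀ ε : ℝ, 0 < ε → ε < ε₀ →
      (¬ ∃ x ∈ Set.Ioo a b, f x = ε ∧ deriv f x = 0) →
      (¬ ∃ x ∈ Set.Ioo a b, f x = -ε ∧ deriv f x = 0) →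
      ∃ x₁ ∈ U ∩ Set.Ioo a b, ∃ x₂ ∈ U ∩ Set.Ioo a b, x₁ ≠ x₂ ∧
        (f x₁ = ε ∨ f x₁ = -ε) ∧ deriv f x₁ ≠ 0 ∧
        (f x₂ = ε ∨ f x₂ = -ε) ∧ deriv f x₂ ≠ 0 := by
  have hopen : IsOpen (Set.Ioo a b) := isOpen_Ioo
  have hfn : AnalyticOnNhd ℝ f (Set.Ioo a b) := hopen.analyticOn_iff_analyticOnNhd.mp hf
  have hfa : AnalyticAt ℝ f x₀ := hfn x₀ hx₀
  -- zeros are isolated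
  have hiso : ∀ᶠ x in nhdsWithin x₀ {x₀}ᶜ, f x ≠ 0 := by
    rcases hfa.eventually_eq_zero_or_eventually_ne_zero with h | h
    · exfalso
      obtain ⟨y, hy, hfy⟩ := hne
      exact hfy (hfn.eqOn_zero_of_preconnected_of_eventuallyEq_zero
        isPreconnected_Ioo hx₀ h hy)
    · exact h
  -- find δ > 0 with ball ⊆ U ∩ Ioo a b and f ≠ 0 on punctured ball
  have hmem : U ∩ Set.Ioo a b ∈ nhds x₀ :=
    Filter.inter_mem hU (hopen.mem_nhds hx₀)
  obtain ⟨s, hs, hsmem, hxs⟩ := mem_nhdsWithin.mp hiso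
  obtain ⟨δ, hδ, hball⟩ := Metric.mem_nhds_iff.mp
    (Filter.inter_mem hmem (hs.mem_nhds hsmem))
  set l := x₀ - δ/2 with hl
  set r := x₀ + δ/2 with hr
  have hballIoo : Metric.ball x₀ δ = Set.Ioo (x₀ - δ) (x₀ + δ) := Real.ball_eq_Ioo x₀ δ
  have hsub : ∀ x, l ≤ x → x ≤ r → x ∈ U ∩ Set.Ioo a b ∧ x ∈ s := by
    intro x h1 h2
    have : x ∈ Metric.ball x₀ δ := by
      rw [hballIoo]; constructor <;> simp only [hl, hr] at h1 h2 <;> linarith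
    exact ⟨(hball this).1, (hball this).2⟩
  have hlr : l < x₀ ∧ x₀ < r := by constructor <;> [simp [hl]; simp [hr]] <;> linarith
  have hfl : f l ≠ 0 := by
    have := (hsub l le_rfl (by linarith [hlr.1, hlr.2])).2
    exact hxs ⟨this, by simp; linarith [hlr.1]⟩
  have hfr : f r ≠ 0 := by
    have := (hsub r (by linarith [hlr.1, hlr.2]) le_rfl).2
    exact hxs ⟨this, by simp; linarith [hlr.2]⟩
  have hcont : ContinuousOn f (Set.Ioo a b) := hf.continuousOn
  refine ⟨min |f l| |f r|, lt_min (abs_pos.mpr hfl) (abs_pos.mpr hfr), ?_⟩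
  intro ε hε hεlt hcrit1 hcrit2
  -- right side: IVT on [x₀, r]
  have hIccR : Set.Icc x₀ r ⊆ Set.Ioo a b := fun x hx =>
    ((hsub x (by linarith [hx.1, hlr.1]) hx.2).1).2
  obtain ⟨x₂, hx₂, hfx₂⟩ := ivt_helper f x₀ r hlr.2 (hcont.mono hIccR) hz ε hε
    (lt_of_lt_of_le hεlt (min_le_right _ _))
  -- left side: IVT on [l, x₀] using g x = f (l + x₀ - x)
  obtain ⟨y, hy, hfy⟩ := ivt_helper (fun x => f (l + x₀ - x)) l x₀ hlr.1
    (by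
      apply hcont.comp (by fun_prop)
      intro x hx
      have : l + x₀ - x ∈ Set.Icc l x₀ :=
        ⟨by linarith [hx.2], by linarith [hx.1]⟩
      exact (hsub _ this.1 (by linarith [this.2, hlr.2])).1.2)
    (by simp [hz]) ε hε (by
      have : l + x₀ - l = x₀ := by ring
      simpa [this, hz] using lt_of_lt_of_le hεlt (min_le_left _ _))
  set x₁ := l + x₀ - y with hx₁def
  have hx₁mem : x₁ ∈ Set.Ioo l x₀ := by
    constructor
    · show l < l + x₀ - y; linarith [hy.2]
    · show l + x₀ - y < x₀; linarith [hy.1]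
  have hfx₁ : f x₁ = ε ∨ f x₁ = -ε := hfy
  have hm₁ : x₁ ∈ U ∩ Set.Ioo a b :=
    (hsub x₁ hx₁mem.1.le (by linarith [hx₁mem.2, hlr.2])).1
  have hm₂ : x₂ ∈ U ∩ Set.Ioo a b :=
    (hsub x₂ (by linarith [hx₂.1, hlr.1]) hx₂.2.le).1
  have hd : ∀ x ∈ Set.Ioo a b, (f x = ε ∨ f x = -ε) → deriv f x ≠ 0 := by
    intro x hx hfx hdx
    rcases hfx with h | h
    · exact hcrit1 ⟨x, hx, h, hdx⟩
    · exact hcrit2 ⟨x, hx, h, hdx⟩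
  refine ⟨x₁, hm₁, x₂, hm₂, by linarith [hx₁mem.2, hx₂.1], hfx₁,
    hd x₁ hm₁.2 hfx₁, hfx₂, hd x₂ hm₂.2 hfx₂⟩
end
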